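/- Let P be a maximal ranked poset of rank n and let J ⊆ K be nonempty distinct poset ideals of P such that J, K, and K ∖ J are each connected in P, and suppose |max(J)| = 1 and |max(K)| ≥ 2, with max(J) ⊆ P_j and max(K) ⊆ P_k where k − j = 1. Then min(K ∖ J) = P_{k−1} ∖ max(J), the sets P_{k−1}, min(K ∖ J), max(K) are pairwise distinct antichains, and the triple {P_{k−1}, min(K ∖ J), max(K)} belongs to Δ*_C(P), where min(W) denotes the set of minimal elements of a subset W of P. -/

import Mathlib

set_option linter.unusedSectionVars false
set_option linter.unusedVariables false
set_option linter.unreachableTactic false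
set_option linter.unusedTactic false
set_option maxHeartbeats 1000000


open Finset
open scoped Classical

variable (P : Type*) [Fintype P] [PartialOrder P]

/-- The comparability graph of a poset. -/
def compGraph : SimpleGraph P where
  Adj x y := x ≠ y ∧ (x ≤ y ∨ y ≤ x)
  symm := ⟨fun _ _ h => ⟨h.1.symm, h.2.symm⟩⟩
  loopless := ⟨fun _ h => h.1 rfl⟩

/-- A subset `W` of `P` is connected in `P` if the subgraph of the comparability
graph induced on `W` is connected (this includes `W` being nonempty). -/
def ConnIn (W : Set P) : Prop :=
  (SimpleGraph.induce W (compGraph P)).Connected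

/-- A poset ideal (down-set). -/
def IsIdealF (I : Finset P) : Prop :=
  ∀ ⦃x y : P⦄, x ∈ I → y ≤ x → y ∈ I

/-- An antichain of the poset. -/
def IsAntichainF (A : Finset P) : Prop :=
  IsAntichain (· ≤ ·) (↑A : Set P)

/-- The 0/1 indicator vector of a subset of `P`. -/
noncomputable def rho (W : Finset P) : P → ℝ :=
  fun x => if x ∈ W then 1 else 0

/-- The order polytope of `P`. -/
def orderPolytope : Set (P → ℝ) :=
  {f | (∀ x, 0 ≤ f x ∧ f x ≤ 1) ∧ ∀ ⦃x y : P⦄, x ≤ y → f y ≤ f x}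

/-- The chain polytope of `P`. -/
def chainPolytope : Set (P → ℝ) :=
  {f | (∀ x, 0 ≤ f x) ∧ ∀ s : Finset P, IsChain (· ≤ ·) (↑s : Set P) → ∑ x ∈ s, f x ≤ 1}

/-- `conv {u, v}` is an edge (1-dimensional exposed face) of the polytope `S`. -/
def IsEdgeOf (S : Set (P → ℝ)) (u v : P → ℝ) : Prop :=
  u ≠ v ∧ IsExposed ℝ S (convexHull ℝ {u, v})

/-- `conv {u, v, w}` is a triangular 2-face of the polytope `S`. -/
def IsTriFaceOf (S : Set (P → ℝ)) (u v w : P → ℝ) : Prop :=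
  u ≠ v ∧ u ≠ w ∧ v ≠ w ∧ IsExposed ℝ S (convexHull ℝ {u, v, w})

/-- The set of maximal elements of a subset of `P`. -/
noncomputable def maxSet (W : Finset P) : Finset P :=
  W.filter (fun x => ∀ y ∈ W, ¬ x < y)

/-- The set of minimal elements of a subset of `P`. -/
noncomputable def minSet (W : Finset P) : Finset P :=
  W.filter (fun x => ∀ y ∈ W, ¬ y < x)

/-- The poset ideal generated by a subset of `P`. -/
noncomputable def genIdeal (A : Finset P) : Finset P :=
  univ.filter (fun x => ∃ a ∈ A, x ≤ a)

/-- The pair `{I, J}` belongs to `E*_O(P)`. -/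
noncomputable def EstarO (I J : Finset P) : Prop :=
  IsIdealF P I ∧ IsIdealF P J ∧ I ≠ J ∧
    IsEdgeOf P (orderPolytope P) (rho P I) (rho P J) ∧
    ¬ IsEdgeOf P (chainPolytope P) (rho P (maxSet P I)) (rho P (maxSet P J))

/-- The pair `{A, B}` belongs to `E*_C(P)`. -/
noncomputable def EstarC (A B : Finset P) : Prop :=
  IsAntichainF P A ∧ IsAntichainF P B ∧ A ≠ B ∧
    IsEdgeOf P (chainPolytope P) (rho P A) (rho P B) ∧
    ¬ IsEdgeOf P (orderPolytope P) (rho P (genIdeal P A)) (rho P (genIdeal P B))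

/-- `Δ_O(P)`: unordered triples of pairwise distinct poset ideals spanning a
triangular 2-face of the order polytope. -/
def DeltaO : Set (Finset (Finset P)) :=
  {T | ∃ I J K : Finset P, T = {I, J, K} ∧ I ≠ J ∧ I ≠ K ∧ J ≠ K ∧
    IsIdealF P I ∧ IsIdealF P J ∧ IsIdealF P K ∧
    IsTriFaceOf P (orderPolytope P) (rho P I) (rho P J) (rho P K)}

/-- `Δ_C(P)`: unordered triples of pairwise distinct antichains spanning a
triangular 2-face of the chain polytope. -/
def DeltaC : Set (Finset (Finset P)) :=
  {T | ∃ A B C : Finset P, T = {A, B, C} ∧ A ≠ B ∧ A ≠ C ∧ B ≠ C ∧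
    IsAntichainF P A ∧ IsAntichainF P B ∧ IsAntichainF P C ∧
    IsTriFaceOf P (chainPolytope P) (rho P A) (rho P B) (rho P C)}

/-- `Δ*_O(P)`: triples in `Δ_O(P)` at least one of whose pairs lies in `E*_O(P)`. -/
def DeltaStarO : Set (Finset (Finset P)) :=
  {T | T ∈ DeltaO P ∧ ∃ I ∈ T, ∃ J ∈ T, I ≠ J ∧ EstarO P I J}

/-- `Δ*_C(P)`: triples in `Δ_C(P)` at least one of whose pairs lies in `E*_C(P)`. -/
def DeltaStarC : Set (Finset (Finset P)) :=
  {T | T ∈ DeltaC P ∧ ∃ A ∈ T, ∃ B ∈ T, A ≠ B ∧ EstarC P A B}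

/-- `r` is a rank function exhibiting `P` as a maximal ranked poset of rank `n`:
`r` is surjective onto `{0, …, n}` and `x < y ↔ r x < r y`. -/
def IsMaxRanked (r : P → ℕ) (n : ℕ) : Prop :=
  (∀ x, r x ≤ n) ∧ (∀ i, i ≤ n → ∃ x, r x = i) ∧ (∀ x y : P, x < y ↔ r x < r y)

/-- The rank level `P_i`. -/
noncomputable def level (r : P → ℕ) (i : ℕ) : Finset P :=
  univ.filter (fun x => r x = i)

/-- `P` contains an `X`-poset as a subposet. -/
def ContainsX : Prop :=
  ∃ a b c d e : P,
    a ≠ b ∧ a ≠ c ∧ a ≠ d ∧ a ≠ e ∧ b ≠ c ∧ b ≠ d ∧ b ≠ e ∧ c ≠ d ∧ c ≠ e ∧ d ≠ e ∧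
    a < c ∧ b < c ∧ c < d ∧ c < e ∧ ¬ a ≤ b ∧ ¬ b ≤ a ∧ ¬ d ≤ e ∧ ¬ e ≤ d


section Helpers
variable {P : Type*} [Fintype P] [PartialOrder P]

-- helpers

lemma rho_apply (W : Finset P) (x : P) : rho P W x = if x ∈ W then 1 else 0 := rfl

lemma rho_ne_of_ne {S T : Finset P} (h : S ≠ T) : rho P S ≠ rho P T := by
  intro hEq
  apply h
  ext x
  have h2 := congrFun hEq x
  by_cases hx : x ∈ S <;> by_cases hy : x ∈ T <;>
    simp [rho, hx, hy] at h2 ⊢ <;> tauto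

lemma rho_mem_chainPolytope {A : Finset P} (hA : IsAntichainF P A) :
    rho P A ∈ chainPolytope P := by
  constructor
  · intro x; rw [rho_apply]; split <;> norm_num
  · intro s hs
    have : ∑ x ∈ s, rho P A x = (((s ∩ A)).card : ℝ) := by
      simp [rho_apply, Finset.sum_boole]
    rw [this]
    have hcard : (s ∩ A).card ≤ 1 := by
      rw [Finset.card_le_one]
      intro x hx y hy
      simp only [Finset.mem_inter] at hx hy
      by_contra hne
      rcases hs hx.1 hy.1 (by exact fun h => hne h) with h | h
      · exact hA hx.2 hy.2 hne h
      · exact hA hy.2 hx.2 (Ne.symm hne) h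
    exact_mod_cast hcard

lemma chainPolytope_convex : Convex ℝ (chainPolytope P) := by
  intro f hf g hg a b ha hb hab
  constructor
  · intro x
    simp only [Pi.add_apply, Pi.smul_apply, smul_eq_mul]
    have := hf.1 x; have := hg.1 x
    positivity
  · intro s hs
    have h1 := hf.2 s hs
    have h2 := hg.2 s hs
    simp only [Pi.add_apply, Pi.smul_apply, smul_eq_mul]
    rw [Finset.sum_add_distrib, ← Finset.mul_sum, ← Finset.mul_sum]
    nlinarith

lemma rho_mem_orderPolytope {I : Finset P} (hI : IsIdealF P I) :
    rho P I ∈ orderPolytope P := by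
  constructor
  · intro x; rw [rho_apply]; split <;> norm_num
  · intro x y hxy
    rw [rho_apply, rho_apply]
    by_cases hy : y ∈ I
    · have : x ∈ I := hI hy hxy
      simp [this, hy]
    · simp only [hy, if_false]
      split <;> norm_num

noncomputable def wt (c : P → ℝ) : (P → ℝ) →L[ℝ] ℝ :=
  ∑ x : P, c x • ContinuousLinearMap.proj x

lemma wt_apply (c : P → ℝ) (f : P → ℝ) : wt c f = ∑ x : P, c x * f x := by
  simp [wt, ContinuousLinearMap.sum_apply]

lemma wt_isLinear (c : P → ℝ) : IsLinearMap ℝ (wt c : (P → ℝ) → ℝ) :=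
  ⟨fun x y => map_add _ x y, fun a x => map_smul _ a x⟩

lemma pair_sum_le {f : P → ℝ} (hf : f ∈ chainPolytope P) {b m : P} (h : b < m) :
    f b + f m ≤ 1 := by
  have hchain : IsChain (· ≤ ·) (↑({b, m} : Finset P) : Set P) := by
    intro x hx y hy hne
    simp only [Finset.coe_insert, Finset.coe_singleton, Set.mem_insert_iff,
      Set.mem_singleton_iff] at hx hy
    rcases hx with rfl | rfl <;> rcases hy with rfl | rfl
    · exact absurd rfl hne
    · exact Or.inl h.le
    · exact Or.inr h.le
    · exact absurd rfl hne
  have := hf.2 {b, m} hchain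
  rwa [Finset.sum_pair h.ne] at this

lemma sum_mul_le {f : P → ℝ} (hf : f ∈ chainPolytope P) (B M : Finset P)
    (hBM : ∀ b ∈ B, ∀ m ∈ M, b < m) :
    (M.card : ℝ) * ∑ b ∈ B, f b + (B.card : ℝ) * ∑ m ∈ M, f m
      ≤ (B.card : ℝ) * M.card := by
  have key : ∑ p ∈ B ×ˢ M, (f p.1 + f p.2) ≤ ∑ _p ∈ B ×ˢ M, (1 : ℝ) := by
    apply Finset.sum_le_sum
    intro p hp
    rw [Finset.mem_product] at hp
    exact pair_sum_le hf (hBM p.1 hp.1 p.2 hp.2)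
  rw [Finset.sum_product] at key
  simp only [Finset.sum_add_distrib, Finset.sum_const, nsmul_eq_mul,
    Finset.sum_const, Finset.card_product] at key
  rw [← Finset.mul_sum] at key
  push_cast at key ⊢
  linarith

lemma pair_eq_of_sum_eq {f : P → ℝ} (hf : f ∈ chainPolytope P) (B M : Finset P)
    (hBM : ∀ b ∈ B, ∀ m ∈ M, b < m)
    (heq : (M.card : ℝ) * ∑ b ∈ B, f b + (B.card : ℝ) * ∑ m ∈ M, f m
      = (B.card : ℝ) * M.card) :
    ∀ b ∈ B, ∀ m ∈ M, f b + f m = 1 := by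
  have hle : ∀ p ∈ B ×ˢ M, f p.1 + f p.2 ≤ (1 : ℝ) := by
    intro p hp
    rw [Finset.mem_product] at hp
    exact pair_sum_le hf (hBM p.1 hp.1 p.2 hp.2)
  have hsum : ∑ p ∈ B ×ˢ M, (f p.1 + f p.2) = ∑ _p ∈ B ×ˢ M, (1 : ℝ) := by
    rw [Finset.sum_product]
    simp only [Finset.sum_add_distrib, Finset.sum_const, nsmul_eq_mul, Finset.card_product]
    rw [← Finset.mul_sum]
    push_cast
    linarith [heq]
  have := (Finset.sum_eq_sum_iff_of_le hle).mp hsum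
  intro b hb m hm
  exact this (b, m) (Finset.mem_product.mpr ⟨hb, hm⟩)

lemma face_subset_aux {c : P → ℝ} {V : ℝ} {S : Set (P → ℝ)}
    (hub : ∀ g ∈ chainPolytope P, wt c g ≤ V)
    (hS : S ⊆ {f | f ∈ chainPolytope P ∧ wt c f = V}) :
    convexHull ℝ S ⊆ {f | f ∈ chainPolytope P ∧ wt c f = V} := by
  apply convexHull_min hS
  exact (chainPolytope_convex).inter (convex_hyperplane (wt_isLinear c) V)

/-- Main workhorse: description of the exposed face for the weight functional. -/
lemma exposed_of_eqs {c : P → ℝ} {V : ℝ} {F : Set (P → ℝ)}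
    (hub : ∀ g ∈ chainPolytope P, wt c g ≤ V)
    (hsub : F ⊆ {f | f ∈ chainPolytope P ∧ wt c f = V})
    (hwitness : ∃ f₀ ∈ F, f₀ ∈ chainPolytope P ∧ wt c f₀ = V)
    (hback : ∀ f ∈ chainPolytope P, wt c f = V → f ∈ convexHull ℝ F) :
    IsExposed ℝ (chainPolytope P) (convexHull ℝ F) := by
  intro _
  refine ⟨wt c, ?_⟩
  ext f
  constructor
  · intro hf
    have h1 := face_subset_aux hub hsub hf
    exact ⟨h1.1, fun g hg => (hub g hg).trans_eq h1.2.symm⟩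
  · rintro ⟨hfC, hmax⟩
    obtain ⟨f₀, _, hf₀C, hf₀V⟩ := hwitness
    have h1 : wt c f ≤ V := hub f hfC
    have h2 : V ≤ wt c f := hf₀V ▸ hmax f₀ hf₀C
    exact hback f hfC (le_antisymm h1 h2)

lemma rho_sum_self (S : Finset P) : ∑ x ∈ S, rho P S x = (S.card : ℝ) := by
  rw [Finset.sum_congr rfl (fun x hx => by simp [rho_apply, hx] : ∀ x ∈ S, rho P S x = 1)]
  simp

lemma rho_sum_sub {S T R : Finset P} (hT : T ⊆ S) (h : ∀ x ∈ R, x ∉ T) :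
    ∑ x ∈ R, rho P T x = 0 :=
  Finset.sum_eq_zero fun x hx => by simp [rho_apply, h x hx]

lemma rho_sum_zero {T R : Finset P} (h : ∀ x ∈ R, x ∉ T) :
    ∑ x ∈ R, rho P T x = 0 :=
  Finset.sum_eq_zero fun x hx => by simp [rho_apply, h x hx]

lemma edge_exposed (L M : Finset P) (hL : L.Nonempty) (hM : M.Nonempty)
    (hLM : ∀ l ∈ L, ∀ m ∈ M, l < m)
    (hLa : IsAntichainF P L) (hMa : IsAntichainF P M) :
    IsExposed ℝ (chainPolytope P) (convexHull ℝ {rho P L, rho P M}) := by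
  classical
  have hML : ∀ m ∈ M, m ∉ L := fun m hm hmL => lt_irrefl m (hLM m hmL m hm)
  have hLM' : ∀ l ∈ L, l ∉ M := fun l hl hlM => lt_irrefl l (hLM l hl l hlM)
  have hdis : Disjoint L M := Finset.disjoint_left.mpr (fun {x} hx => hLM' x hx)
  set R : Finset P := univ \ (L ∪ M) with hRdef
  have hRL : ∀ x ∈ R, x ∉ L := by
    intro x hx
    simp only [hRdef, Finset.mem_sdiff, Finset.mem_union] at hx
    tauto
  have hRM : ∀ x ∈ R, x ∉ M := by
    intro x hx
    simp only [hRdef, Finset.mem_sdiff, Finset.mem_union] at hx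
    tauto
  set c : P → ℝ := fun x => if x ∈ L then (M.card : ℝ) else if x ∈ M then (L.card : ℝ)
    else -1 with hcdef
  have hsplit : ∀ f : P → ℝ,
      wt c f = (M.card : ℝ) * ∑ x ∈ L, f x + (L.card : ℝ) * ∑ x ∈ M, f x
        - ∑ x ∈ R, f x := by
    intro f
    rw [wt_apply]
    have h := Finset.sum_sdiff (f := fun x => c x * f x) (Finset.subset_univ (L ∪ M))
    rw [← h, Finset.sum_union hdis]
    have e1 : ∑ x ∈ L, c x * f x = (M.card : ℝ) * ∑ x ∈ L, f x := by
      rw [Finset.mul_sum]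
      exact Finset.sum_congr rfl fun x hx => by simp [hcdef, hx]
    have e2 : ∑ x ∈ M, c x * f x = (L.card : ℝ) * ∑ x ∈ M, f x := by
      rw [Finset.mul_sum]
      exact Finset.sum_congr rfl fun x hx => by simp [hcdef, hML x hx, hx]
    have e3 : ∑ x ∈ R, c x * f x = - ∑ x ∈ R, f x := by
      rw [← Finset.sum_neg_distrib]
      exact Finset.sum_congr rfl fun x hx => by simp [hcdef, hRL x hx, hRM x hx]
    rw [e1, e2, e3]
    ring
  have hub : ∀ g ∈ chainPolytope P, wt c g ≤ (L.card : ℝ) * M.card := by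
    intro g hg
    rw [hsplit]
    have h1 := sum_mul_le hg L M hLM
    have h2 : 0 ≤ ∑ x ∈ R, g x := Finset.sum_nonneg fun x _ => hg.1 x
    linarith
  have hvL : wt c (rho P L) = (L.card : ℝ) * M.card := by
    rw [hsplit, rho_sum_self, rho_sum_zero hML, rho_sum_zero hRL]
    ring
  have hvM : wt c (rho P M) = (L.card : ℝ) * M.card := by
    rw [hsplit, rho_sum_self, rho_sum_zero hLM', rho_sum_zero hRM]
    ring
  apply exposed_of_eqs (c := c) (V := (L.card : ℝ) * M.card) hub
  · rintro f (rfl | rfl)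
    · exact ⟨rho_mem_chainPolytope hLa, hvL⟩
    · exact ⟨rho_mem_chainPolytope hMa, hvM⟩
  · exact ⟨rho P L, Set.mem_insert _ _, rho_mem_chainPolytope hLa, hvL⟩
  · intro f hf hVf
    rw [hsplit] at hVf
    have hRnn : 0 ≤ ∑ x ∈ R, f x := Finset.sum_nonneg fun x _ => hf.1 x
    have hle := sum_mul_le hf L M hLM
    have hR0 : ∑ x ∈ R, f x = 0 := by linarith
    have heq : (M.card : ℝ) * ∑ x ∈ L, f x + (L.card : ℝ) * ∑ x ∈ M, f x
        = (L.card : ℝ) * M.card := by linarith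
    have hpairs := pair_eq_of_sum_eq hf L M hLM heq
    obtain ⟨l₀, hl₀⟩ := hL
    obtain ⟨m₀, hm₀⟩ := hM
    have hfm : ∀ m ∈ M, f m = 1 - f l₀ := fun m hm => by
      have := hpairs l₀ hl₀ m hm; linarith
    have hfl : ∀ l ∈ L, f l = f l₀ := fun l hl => by
      have h1 := hpairs l hl m₀ hm₀
      have h2 := hfm m₀ hm₀
      linarith
    have hfR : ∀ x ∈ R, f x = 0 :=
      (Finset.sum_eq_zero_iff_of_nonneg (fun y _ => hf.1 y)).mp hR0
    have ht0 : 0 ≤ f l₀ := hf.1 l₀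
    have ht1 : f l₀ ≤ 1 := by
      have h1 := hf.1 m₀
      have h2 := hfm m₀ hm₀
      linarith
    rw [convexHull_pair]
    refine ⟨f l₀, 1 - f l₀, ht0, by linarith, by ring, ?_⟩
    funext x
    simp only [Pi.add_apply, Pi.smul_apply, smul_eq_mul]
    by_cases hxL : x ∈ L
    · simp [rho_apply, hxL, hLM' x hxL, hfl x hxL]
    · by_cases hxM : x ∈ M
      · simp [rho_apply, hxM, hML x hxM, hfm x hxM]
      · have hxR : x ∈ R := by simp [hRdef, Finset.mem_sdiff, Finset.mem_union, hxL, hxM]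
        simp [rho_apply, hxL, hxM, hfR x hxR]

lemma tri_exposed (B M : Finset P) (a : P) (hB : B.Nonempty) (hM : M.Nonempty)
    (haB : a ∉ B) (hBM : ∀ b ∈ B, ∀ m ∈ M, b < m) (haM : ∀ m ∈ M, a < m)
    (hLa : IsAntichainF P (insert a B)) (hMa : IsAntichainF P M) :
    IsExposed ℝ (chainPolytope P)
      (convexHull ℝ {rho P (insert a B), rho P B, rho P M}) := by
  classical
  have haM' : a ∉ M := fun h => lt_irrefl a (haM a h)
  have hMB : ∀ m ∈ M, m ∉ B := fun m hm hmB => lt_irrefl m (hBM m hmB m hm)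
  have hBM' : ∀ b ∈ B, b ∉ M := fun b hb hbM => lt_irrefl b (hBM b hb b hbM)
  have hdis : Disjoint B M := Finset.disjoint_left.mpr (fun {x} hx => hBM' x hx)
  have haBM : a ∉ B ∪ M := by simp [haB, haM']
  set R : Finset P := univ \ insert a (B ∪ M) with hRdef
  have hRB : ∀ x ∈ R, x ∉ B := by
    intro x hx
    simp only [hRdef, Finset.mem_sdiff, Finset.mem_insert, Finset.mem_union] at hx
    tauto
  have hRM : ∀ x ∈ R, x ∉ M := by
    intro x hx
    simp only [hRdef, Finset.mem_sdiff, Finset.mem_insert, Finset.mem_union] at hx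
    tauto
  have hRa : ∀ x ∈ R, x ≠ a := by
    intro x hx
    simp only [hRdef, Finset.mem_sdiff, Finset.mem_insert, Finset.mem_union] at hx
    tauto
  have hRiaB : ∀ x ∈ R, x ∉ insert a B := by
    intro x hx
    simp only [Finset.mem_insert]
    push_neg
    exact ⟨hRa x hx, hRB x hx⟩
  have hMiaB : ∀ x ∈ M, x ∉ insert a B := by
    intro x hx
    simp only [Finset.mem_insert]
    push_neg
    exact ⟨fun h => haM' (h ▸ hx), hMB x hx⟩
  set c : P → ℝ := fun x => if x ∈ B then (M.card : ℝ) else if x ∈ M then (B.card : ℝ)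
    else if x = a then 0 else -1 with hcdef
  have hsplit : ∀ f : P → ℝ,
      wt c f = (M.card : ℝ) * ∑ x ∈ B, f x + (B.card : ℝ) * ∑ x ∈ M, f x
        - ∑ x ∈ R, f x := by
    intro f
    rw [wt_apply]
    have h := Finset.sum_sdiff (f := fun x => c x * f x)
      (Finset.subset_univ (insert a (B ∪ M)))
    rw [← h, Finset.sum_insert haBM, Finset.sum_union hdis]
    have e0 : c a * f a = 0 := by simp [hcdef, haB, haM']
    have e1 : ∑ x ∈ B, c x * f x = (M.card : ℝ) * ∑ x ∈ B, f x := by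
      rw [Finset.mul_sum]
      exact Finset.sum_congr rfl fun x hx => by simp [hcdef, hx]
    have e2 : ∑ x ∈ M, c x * f x = (B.card : ℝ) * ∑ x ∈ M, f x := by
      rw [Finset.mul_sum]
      exact Finset.sum_congr rfl fun x hx => by simp [hcdef, hMB x hx, hx]
    have e3 : ∑ x ∈ R, c x * f x = - ∑ x ∈ R, f x := by
      rw [← Finset.sum_neg_distrib]
      exact Finset.sum_congr rfl fun x hx => by
        simp [hcdef, hRB x hx, hRM x hx, hRa x hx]
    rw [e0, e1, e2, e3]
    ring
  have hub : ∀ g ∈ chainPolytope P, wt c g ≤ (B.card : ℝ) * M.card := by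
    intro g hg
    rw [hsplit]
    have h1 := sum_mul_le hg B M hBM
    have h2 : 0 ≤ ∑ x ∈ R, g x := Finset.sum_nonneg fun x _ => hg.1 x
    linarith
  have hBsub : (B : Set P) ⊆ (insert a B : Finset P) := by
    intro x hx
    simp only [Finset.coe_insert, Set.mem_insert_iff]
    exact Or.inr hx
  have hBa : IsAntichainF P B := hLa.subset hBsub
  have hsumBu : ∑ x ∈ B, rho P (insert a B) x = (B.card : ℝ) := by
    rw [Finset.sum_congr rfl
      (fun x hx => by simp [rho_apply, Finset.mem_insert_of_mem hx] :
        ∀ x ∈ B, rho P (insert a B) x = 1)]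
    simp
  have hvu : wt c (rho P (insert a B)) = (B.card : ℝ) * M.card := by
    rw [hsplit, hsumBu, rho_sum_zero hMiaB, rho_sum_zero hRiaB]
    ring
  have hvv : wt c (rho P B) = (B.card : ℝ) * M.card := by
    rw [hsplit, rho_sum_self, rho_sum_zero hMB, rho_sum_zero hRB]
    ring
  have hvw : wt c (rho P M) = (B.card : ℝ) * M.card := by
    rw [hsplit, rho_sum_self, rho_sum_zero hBM', rho_sum_zero hRM]
    ring
  apply exposed_of_eqs (c := c) (V := (B.card : ℝ) * M.card) hub
  · rintro f (rfl | rfl | rfl)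
    · exact ⟨rho_mem_chainPolytope hLa, hvu⟩
    · exact ⟨rho_mem_chainPolytope hBa, hvv⟩
    · exact ⟨rho_mem_chainPolytope hMa, hvw⟩
  · exact ⟨rho P (insert a B), Set.mem_insert _ _, rho_mem_chainPolytope hLa, hvu⟩
  · intro f hf hVf
    rw [hsplit] at hVf
    have hRnn : 0 ≤ ∑ x ∈ R, f x := Finset.sum_nonneg fun x _ => hf.1 x
    have hle := sum_mul_le hf B M hBM
    have hR0 : ∑ x ∈ R, f x = 0 := by linarith
    have heq : (M.card : ℝ) * ∑ x ∈ B, f x + (B.card : ℝ) * ∑ x ∈ M, f x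
        = (B.card : ℝ) * M.card := by linarith
    have hpairs := pair_eq_of_sum_eq hf B M hBM heq
    obtain ⟨b₀, hb₀⟩ := hB
    obtain ⟨m₀, hm₀⟩ := hM
    have hfm : ∀ m ∈ M, f m = 1 - f b₀ := fun m hm => by
      have := hpairs b₀ hb₀ m hm; linarith
    have hfb : ∀ b ∈ B, f b = f b₀ := fun b hb => by
      have h1 := hpairs b hb m₀ hm₀
      have h2 := hfm m₀ hm₀
      linarith
    have hfR : ∀ x ∈ R, f x = 0 :=
      (Finset.sum_eq_zero_iff_of_nonneg (fun y _ => hf.1 y)).mp hR0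
    have ht0 : 0 ≤ f b₀ := hf.1 b₀
    have ht1 : f b₀ ≤ 1 := by
      have h1 := hf.1 m₀
      have h2 := hfm m₀ hm₀
      linarith
    have ha0 : 0 ≤ f a := hf.1 a
    have hat : f a ≤ f b₀ := by
      have h1 := pair_sum_le hf (haM m₀ hm₀)
      have h2 := hfm m₀ hm₀
      linarith
    -- f is the convex combination (f a) • u + (f b₀ - f a) • v + (1 - f b₀) • w
    have hcomb : f = f a • rho P (insert a B) + (f b₀ - f a) • rho P B
        + (1 - f b₀) • rho P M := by
      funext x
      simp only [Pi.add_apply, Pi.smul_apply, smul_eq_mul]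
      by_cases hxB : x ∈ B
      · simp only [rho_apply, hxB, Finset.mem_insert_of_mem hxB, hBM' x hxB,
          if_true, if_false, hfb x hxB]
        ring
      · by_cases hxa : x = a
        · subst hxa
          simp only [rho_apply, Finset.mem_insert_self, haB, haM', if_true, if_false]
          ring
        · by_cases hxM : x ∈ M
          · simp only [rho_apply, hxM, hMB x hxM, hMiaB x hxM, if_true, if_false,
              hfm x hxM]
            ring
          · have hxR : x ∈ R := by
              simp [hRdef, Finset.mem_sdiff, Finset.mem_insert, Finset.mem_union,
                hxa, hxB, hxM]
            simp only [rho_apply, hxB, hxM, if_false, hfR x hxR]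
            have : x ∉ insert a B := by simp [hxa, hxB]
            simp [this]
    rw [hcomb]
    have hcx := convex_convexHull ℝ
      ({rho P (insert a B), rho P B, rho P M} : Set (P → ℝ))
    have h3 := hcx.sum_mem (t := (univ : Finset (Fin 3)))
      (w := ![f a, f b₀ - f a, 1 - f b₀])
      (z := ![rho P (insert a B), rho P B, rho P M])
      (fun i _ => by fin_cases i <;> simp <;> linarith)
      (by simp [Fin.sum_univ_three] <;> ring)
      (fun i _ => by
        fin_cases i <;>
          exact subset_convexHull ℝ _ (by simp))
    rw [Fin.sum_univ_three] at h3
    simpa using h3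

lemma not_order_edge (I₀ M : Finset P)
    (hMI : ∀ m ∈ M, m ∉ I₀)
    (hIdeals : ∀ S ⊆ M, IsIdealF P (I₀ ∪ S))
    (hM2 : 2 ≤ M.card) :
    ¬ IsExposed ℝ (orderPolytope P) (convexHull ℝ {rho P I₀, rho P (I₀ ∪ M)}) := by
  classical
  intro hexp
  obtain ⟨m₁, hm₁, m₂, hm₂, hne⟩ := Finset.one_lt_card.mp hM2
  set u := rho P I₀ with hu
  set v := rho P (I₀ ∪ M) with hv
  obtain ⟨l, heq⟩ := hexp ⟨u, subset_convexHull ℝ _ (Set.mem_insert _ _)⟩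
  set w₁ := rho P (I₀ ∪ {m₁}) with hw1
  set w₂ := rho P (I₀ ∪ (M \ {m₁})) with hw2
  have hw₁O : w₁ ∈ orderPolytope P :=
    rho_mem_orderPolytope (hIdeals {m₁} (Finset.singleton_subset_iff.mpr hm₁))
  have hw₂O : w₂ ∈ orderPolytope P :=
    rho_mem_orderPolytope (hIdeals (M \ {m₁}) (Finset.sdiff_subset))
  have huO : u ∈ orderPolytope P := by
    have : I₀ = I₀ ∪ (∅ : Finset P) := by simp
    rw [hu, this]
    exact rho_mem_orderPolytope (hIdeals ∅ (Finset.empty_subset _))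
  have hvO : v ∈ orderPolytope P :=
    rho_mem_orderPolytope (hIdeals M (subset_refl _))
  set z := (1/2 : ℝ) • u + (1/2 : ℝ) • v with hz
  have hzmem : z ∈ convexHull ℝ ({u, v} : Set (P → ℝ)) := by
    apply convex_convexHull ℝ ({u, v} : Set (P → ℝ))
      (subset_convexHull ℝ _ (Set.mem_insert _ _))
      (subset_convexHull ℝ _ (Set.mem_insert_of_mem _ rfl)) <;> norm_num
  have hzface : z ∈ {x ∈ orderPolytope P | ∀ y ∈ orderPolytope P, l y ≤ l x} := by
    rw [← heq]; exact hzmem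
  have hzsplit : z = (1/2 : ℝ) • w₁ + (1/2 : ℝ) • w₂ := by
    funext x
    simp only [hz, hu, hv, hw1, hw2, Pi.add_apply, Pi.smul_apply, smul_eq_mul, rho_apply]
    by_cases hxI : x ∈ I₀
    · norm_num [Finset.mem_union, hxI]
    · by_cases hxm : x = m₁
      · have hxM : x ∈ M := hxm ▸ hm₁
        have h1 : x ∉ M \ {m₁} := by simp [hxm]
        have h2 : x ∈ ({m₁} : Finset P) := by simp [hxm]
        norm_num [Finset.mem_union, hxI, hxM, h1, h2]
        exact hxm
      · by_cases hxM : x ∈ M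
        · have h1 : x ∈ M \ {m₁} := Finset.mem_sdiff.mpr ⟨hxM, by simp [hxm]⟩
          have h2 : x ∉ ({m₁} : Finset P) := by simp [hxm]
          norm_num [Finset.mem_union, hxI, hxM, h1, h2]
          exact hxm
        · have h1 : x ∉ M \ {m₁} := fun h => hxM (Finset.mem_sdiff.mp h).1
          have h2 : x ∉ ({m₁} : Finset P) := by simp [hxm]
          norm_num [Finset.mem_union, hxI, hxM, h1, h2]
          exact hxm
  have hlz : l z = (1/2 : ℝ) * l w₁ + (1/2 : ℝ) * l w₂ := by
    rw [hzsplit]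
    simp [map_add, map_smul]
  have h1 : l w₁ ≤ l z := hzface.2 w₁ hw₁O
  have h2 : l w₂ ≤ l z := hzface.2 w₂ hw₂O
  have hlw₁ : l w₁ = l z := by linarith
  have hw₁face : w₁ ∈ convexHull ℝ ({u, v} : Set (P → ℝ)) := by
    rw [heq]
    exact ⟨hw₁O, fun y hy => hlw₁ ▸ hzface.2 y hy⟩
  rw [convexHull_pair] at hw₁face
  obtain ⟨p, q, hp, hq, hpq, hcomb⟩ := hw₁face
  have hm₁I : m₁ ∉ I₀ := hMI m₁ hm₁
  have hm₂I : m₂ ∉ I₀ := hMI m₂ hm₂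
  have hw₁m₁ : w₁ m₁ = 1 := by simp [hw1, rho_apply]
  have hw₁m₂ : w₁ m₂ = 0 := by simp [hw1, rho_apply, hm₂I, hne.symm]
  have hum : ∀ m ∈ M, u m = 0 := fun m hm => by simp [hu, rho_apply, hMI m hm]
  have hvm : ∀ m ∈ M, v m = 1 := fun m hm => by simp [hv, rho_apply, hm]
  have e₁ := congrFun hcomb m₁
  have e₂ := congrFun hcomb m₂
  simp only [Pi.add_apply, Pi.smul_apply, smul_eq_mul] at e₁ e₂
  rw [hum m₁ hm₁, hvm m₁ hm₁, hw₁m₁] at e₁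
  rw [hum m₂ hm₂, hvm m₂ hm₂, hw₁m₂] at e₂
  linarith

lemma exists_le_maxSetAux {W : Finset P} {x : P} (hx : x ∈ W) :
    ∃ y ∈ W.filter (fun x => ∀ y ∈ W, ¬ x < y), x ≤ y := by
  obtain ⟨y, hymax'⟩ := Finset.exists_maximal (s := W.filter (x ≤ ·))
    ⟨x, Finset.mem_filter.mpr ⟨hx, le_refl x⟩⟩
  have hy : y ∈ W.filter (x ≤ ·) := hymax'.1
  have hymax : ∀ z ∈ W.filter (x ≤ ·), ¬ y < z :=
    fun z hz hlt => hlt.not_ge (hymax'.2 hz hlt.le)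
  rw [Finset.mem_filter] at hy
  refine ⟨y, Finset.mem_filter.mpr ⟨hy.1, ?_⟩, hy.2⟩
  intro z hz hlt
  exact hymax z (Finset.mem_filter.mpr ⟨hz, hy.2.trans hlt.le⟩) hlt

lemma exists_adj_of_connected {W : Set P} (h : ConnIn P W) {x y : P}
    (hx : x ∈ W) (hy : y ∈ W) (hne : x ≠ y) :
    ∃ z ∈ W, z ≠ x ∧ (x ≤ z ∨ z ≤ x) := by
  obtain ⟨w⟩ := h.preconnected ⟨x, hx⟩ ⟨y, hy⟩
  have hnn : ¬ w.Nil :=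
    SimpleGraph.Walk.not_nil_of_ne (fun hEq => hne (congrArg Subtype.val hEq))
  have hadj := SimpleGraph.Walk.adj_snd hnn
  set z := w.getVert 1 with hzdef
  have hadj' : (compGraph P).Adj x z.val := hadj
  exact ⟨z.val, z.2, hadj'.1.symm, hadj'.2⟩

end Helpers

/-- Case 3 of Lemma 3.4: if `J ⊆ K` are nonempty distinct connected
poset ideals with `K \ J` connected, `|max J| = 1`, `|max K| ≥ 2`, `max J ⊆ P_j`,
`max K ⊆ P_k` and `k - j = 1`, then `min(K \ J) = P_{k-1} \ max J`, the sets
`P_{k-1}`, `min(K \ J)`, `max K` are pairwise distinct antichains, and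
`{P_{k-1}, min(K \ J), max K} ∈ Δ*_C(P)`. -/

theorem case3_mem_DeltaStarC
    (r : P → ℕ) (n : ℕ) (hr : IsMaxRanked P r n)
    (J K : Finset P) (hJ : IsIdealF P J) (hK : IsIdealF P K)
    (hJne : J.Nonempty) (hKne : K.Nonempty) (hne : J ≠ K) (hJK : J ⊆ K)
    (hcJ : ConnIn P (↑J)) (hcK : ConnIn P (↑K)) (hcKJ : ConnIn P (↑(K \ J)))
    (hmaxJ : (maxSet P J).card = 1) (hmaxK : 2 ≤ (maxSet P K).card)
    (j k : ℕ) (hkn : k ≤ n) (hkj : k = j + 1)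
    (hj : maxSet P J ⊆ level P r j) (hk : maxSet P K ⊆ level P r k) :
    minSet P (K \ J) = level P r (k - 1) \ maxSet P J ∧
    IsAntichainF P (level P r (k - 1)) ∧ IsAntichainF P (minSet P (K \ J)) ∧
      IsAntichainF P (maxSet P K) ∧
    level P r (k - 1) ≠ minSet P (K \ J) ∧ level P r (k - 1) ≠ maxSet P K ∧
      minSet P (K \ J) ≠ maxSet P K ∧
    ({level P r (k - 1), minSet P (K \ J), maxSet P K} : Finset (Finset P)) ∈
      DeltaStarC P := by
  classical
  obtain ⟨hrn, hrsurj, hrlt⟩ := hr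
  have hle_iff : ∀ x y : P, x ≤ y ↔ x = y ∨ r x < r y := by
    intro x y
    constructor
    · intro h
      rcases eq_or_lt_of_le h with h | h
      · exact Or.inl h
      · exact Or.inr ((hrlt x y).mp h)
    · rintro (rfl | h)
      · exact le_refl x
      · exact ((hrlt x y).mpr h).le
  have hkj' : k - 1 = j := by omega
  have hlevel_mem : ∀ (i : ℕ) (x : P), x ∈ level P r i ↔ r x = i := by
    intro i x
    simp [level]
  -- the unique maximal element of J
  obtain ⟨a, ha⟩ := Finset.card_eq_one.mp hmaxJ
  have haMJ : a ∈ maxSet P J := ha ▸ Finset.mem_singleton_self a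
  have haJ : a ∈ J := Finset.mem_of_mem_filter a haMJ
  have hra : r a = j := (hlevel_mem j a).mp (hj haMJ)
  have hJmem : ∀ x, x ∈ J ↔ x ≤ a := by
    intro x
    constructor
    · intro hx
      obtain ⟨y, hy, hxy⟩ := exists_le_maxSetAux hx
      have : y ∈ maxSet P J := hy
      rw [ha, Finset.mem_singleton] at this
      exact this ▸ hxy
    · exact fun h => hJ haJ h
  set M := maxSet P K with hMdef
  have hMK : M ⊆ K := Finset.filter_subset _ _
  have hrM : ∀ m ∈ M, r m = k := fun m hm => (hlevel_mem k m).mp (hk hm)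
  have hMne : M.Nonempty := Finset.card_pos.mp (by omega)
  have hKmem : ∀ x, x ∈ K ↔ r x < k ∨ x ∈ M := by
    intro x
    constructor
    · intro hx
      obtain ⟨y, hy, hxy⟩ := exists_le_maxSetAux hx
      rcases (hle_iff x y).mp hxy with rfl | hlt
      · exact Or.inr hy
      · exact Or.inl (by rw [← hrM y hy]; exact hlt)
    · rintro (hx | hx)
      · obtain ⟨m₀, hm₀⟩ := hMne
        have : x ≤ m₀ := (hle_iff x m₀).mpr (Or.inr (by rw [hrM m₀ hm₀]; exact hx))
        exact hK (hMK hm₀) this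
      · exact hMK hx
  have haK : a ∈ K := (hKmem a).mpr (Or.inl (by omega))
  have haM : a ∉ M := fun h => by have := hrM a h; omega
  have hKJ_mem : ∀ x, x ∈ K \ J ↔ (r x = j ∧ x ≠ a) ∨ x ∈ M := by
    intro x
    rw [Finset.mem_sdiff, hKmem, hJmem, hle_iff]
    constructor
    · rintro ⟨h1 | h1, h2⟩
      · push_neg at h2
        left
        exact ⟨by omega, h2.1⟩
      · exact Or.inr h1
    · rintro (⟨h1, h2⟩ | h1)
      · exact ⟨Or.inl (by omega), by push_neg; exact ⟨h2, by omega⟩⟩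
      · refine ⟨Or.inr h1, ?_⟩
        push_neg
        have hrx : r x = k := hrM x h1
        exact ⟨fun hEq => haM (hEq ▸ h1), by omega⟩
  set Bset := level P r j \ {a} with hBdef
  have hBset_mem : ∀ x, x ∈ Bset ↔ r x = j ∧ x ≠ a := by
    intro x
    simp [hBdef, Finset.mem_sdiff, hlevel_mem, level]
  have hBne : Bset.Nonempty := by
    by_contra hE
    rw [Finset.not_nonempty_iff_eq_empty] at hE
    have hall : ∀ x : P, r x = j → x = a := by
      intro x hx
      by_contra hxa
      have : x ∈ Bset := (hBset_mem x).mpr ⟨hx, hxa⟩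
      simp [hE] at this
    obtain ⟨m₁, hm₁, m₂, hm₂, hmne⟩ := Finset.one_lt_card.mp hmaxK
    have hm₁' : m₁ ∈ K \ J := (hKJ_mem m₁).mpr (Or.inr hm₁)
    have hm₂' : m₂ ∈ K \ J := (hKJ_mem m₂).mpr (Or.inr hm₂)
    obtain ⟨z, hzW, hzne, hzcomp⟩ := exists_adj_of_connected hcKJ
      (Finset.mem_coe.mpr hm₁') (Finset.mem_coe.mpr hm₂') hmne
    have hz : z ∈ K \ J := Finset.mem_coe.mp hzW
    rcases (hKJ_mem z).mp hz with ⟨hz1, hz2⟩ | hzM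
    · exact hz2 (hall z hz1)
    · have h1 : r z = k := hrM z hzM
      have h2 : r m₁ = k := hrM m₁ hm₁
      rcases hzcomp with h | h <;> rcases (hle_iff _ _).mp h with hEq | hlt
      · exact hzne hEq.symm
      · omega
      · exact hzne hEq
      · omega
  have part1 : minSet P (K \ J) = Bset := by
    ext x
    simp only [minSet, Finset.mem_filter]
    constructor
    · rintro ⟨hxW, hmin⟩
      rcases (hKJ_mem x).mp hxW with ⟨h1, h2⟩ | hxM
      · exact (hBset_mem x).mpr ⟨h1, h2⟩
      · exfalso
        obtain ⟨b, hb⟩ := hBne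
        have hb' : b ∈ K \ J := (hKJ_mem b).mpr (Or.inl ((hBset_mem b).mp hb))
        have hblt : b < x := (hrlt b x).mpr (by
          have := ((hBset_mem b).mp hb).1
          have := hrM x hxM
          omega)
        exact hmin b hb' hblt
    · intro hx
      obtain ⟨h1, h2⟩ := (hBset_mem x).mp hx
      refine ⟨(hKJ_mem x).mpr (Or.inl ⟨h1, h2⟩), ?_⟩
      intro y hy hylt
      have hry : r y < j := by rw [← h1]; exact (hrlt y x).mp hylt
      rcases (hKJ_mem y).mp hy with ⟨h3, _⟩ | hyM
      · omega
      · have := hrM y hyM; omega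
  have hlevel_ac : ∀ (i : ℕ) (S : Finset P), S ⊆ level P r i → IsAntichainF P S := by
    intro i S hS x hx y hy hne hle
    have hrx : r x = i := (hlevel_mem i x).mp (hS (Finset.mem_coe.mp hx))
    have hry : r y = i := (hlevel_mem i y).mp (hS (Finset.mem_coe.mp hy))
    rcases (hle_iff x y).mp hle with hEq | hlt
    · exact hne hEq
    · omega
  set L := level P r j with hLdef
  have haL : a ∈ L := (hlevel_mem j a).mpr hra
  have hBsubL : Bset ⊆ L := Finset.sdiff_subset
  have acL : IsAntichainF P L := hlevel_ac j L (subset_refl _)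
  have acB : IsAntichainF P Bset := hlevel_ac j Bset hBsubL
  have acM : IsAntichainF P M := hlevel_ac k M hk
  obtain ⟨b₀, hb₀⟩ := id hBne
  have hLne_min : L ≠ Bset := fun hEq => ((hBset_mem a).mp (hEq ▸ haL)).2 rfl
  have hLne_M : L ≠ M := fun hEq => haM (hEq ▸ haL)
  have hBset_ne_M : Bset ≠ M := fun hEq => by
    have h1 := ((hBset_mem b₀).mp hb₀).1
    have h2 := hrM b₀ (hEq ▸ hb₀)
    omega
  have hL_eq : insert a Bset = L := by
    ext x
    rw [Finset.mem_insert, hBset_mem, hlevel_mem]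
    constructor
    · rintro (rfl | ⟨h, _⟩)
      · exact hra
      · exact h
    · intro h
      by_cases hxa : x = a
      · exact Or.inl hxa
      · exact Or.inr ⟨h, hxa⟩
  have hBM : ∀ b ∈ Bset, ∀ m ∈ M, b < m := fun b hb m hm => (hrlt b m).mpr (by
    have := ((hBset_mem b).mp hb).1
    have := hrM m hm
    omega)
  have hLMlt : ∀ l ∈ L, ∀ m ∈ M, l < m := fun l hl m hm => (hrlt l m).mpr (by
    have := (hlevel_mem j l).mp hl
    have := hrM m hm
    omega)
  have haMlt : ∀ m ∈ M, a < m := fun m hm => hLMlt a haL m hm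
  have haBset : a ∉ Bset := fun h => ((hBset_mem a).mp h).2 rfl
  have hLne : L.Nonempty := ⟨a, haL⟩
  have tri : IsExposed ℝ (chainPolytope P)
      (convexHull ℝ {rho P L, rho P Bset, rho P M}) := by
    have := tri_exposed Bset M a hBne hMne haBset hBM haMlt
      (hL_eq ▸ acL) acM
    rwa [hL_eq] at this
  have edge := edge_exposed L M hLne hMne hLMlt acL acM
  -- order polytope: not an edge
  set I₀ := genIdeal P L with hI₀def
  have hI₀mem : ∀ x, x ∈ I₀ ↔ r x ≤ j := by
    intro x
    simp only [hI₀def, genIdeal, Finset.mem_filter, Finset.mem_univ, true_and]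
    constructor
    · rintro ⟨l, hl, hxl⟩
      have hrl : r l = j := (hlevel_mem j l).mp hl
      rcases (hle_iff x l).mp hxl with rfl | hlt <;> omega
    · intro h
      rcases eq_or_lt_of_le h with hEq | hlt
      · exact ⟨x, (hlevel_mem j x).mpr hEq, le_refl x⟩
      · exact ⟨a, haL, (hle_iff x a).mpr (Or.inr (by omega))⟩
  have hGM : genIdeal P M = I₀ ∪ M := by
    ext x
    simp only [genIdeal, Finset.mem_filter, Finset.mem_univ, true_and, Finset.mem_union]
    constructor
    · rintro ⟨m, hm, hxm⟩
      rcases (hle_iff x m).mp hxm with rfl | hlt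
      · exact Or.inr hm
      · have := hrM m hm
        exact Or.inl ((hI₀mem x).mpr (by omega))
    · rintro (hx | hx)
      · obtain ⟨m₀, hm₀⟩ := hMne
        have := (hI₀mem x).mp hx
        have := hrM m₀ hm₀
        exact ⟨m₀, hm₀, (hle_iff x m₀).mpr (Or.inr (by omega))⟩
      · exact ⟨x, hx, le_refl x⟩
  have hMI₀ : ∀ m ∈ M, m ∉ I₀ := fun m hm h => by
    have := (hI₀mem m).mp h
    have := hrM m hm
    omega
  have hIdeals : ∀ S ⊆ M, IsIdealF P (I₀ ∪ S) := by
    intro S hS x y hx hyx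
    rw [Finset.mem_union] at hx ⊢
    rcases hx with hx | hx
    · have h1 := (hI₀mem x).mp hx
      rcases (hle_iff y x).mp hyx with rfl | hlt
      · exact Or.inl hx
      · exact Or.inl ((hI₀mem y).mpr (by omega))
    · rcases (hle_iff y x).mp hyx with rfl | hlt
      · exact Or.inr hx
      · have := hrM x (hS hx)
        exact Or.inl ((hI₀mem y).mpr (by omega))
  have notedge : ¬ IsEdgeOf P (orderPolytope P) (rho P (genIdeal P L))
      (rho P (genIdeal P M)) := by
    rintro ⟨-, hexp⟩
    rw [hGM] at hexp
    exact not_order_edge I₀ M hMI₀ hIdeals hmaxK hexp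
  have estar : EstarC P L M :=
    ⟨acL, acM, hLne_M, ⟨rho_ne_of_ne hLne_M, edge⟩, notedge⟩
  have hDeltaC : ({L, Bset, M} : Finset (Finset P)) ∈ DeltaC P :=
    ⟨L, Bset, M, rfl, hLne_min, hLne_M, hBset_ne_M, acL, acB, acM,
      rho_ne_of_ne hLne_min, rho_ne_of_ne hLne_M, rho_ne_of_ne hBset_ne_M, tri⟩
  refine ⟨?_, ?_, ?_, ?_, ?_, ?_, ?_, ?_⟩
  · rw [hkj', ha, part1]
  · rw [hkj']; exact acL
  · rw [part1]; exact acB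
  · exact acM
  · rw [hkj', part1]; exact hLne_min
  · rw [hkj']; exact hLne_M
  · rw [part1]; exact hBset_ne_M
  · rw [hkj', part1]
    exact ⟨hDeltaC, L, by simp [hLdef], M, by simp, hLne_M, estar⟩
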